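/- With H_S as in the degenerate donor-acceptor model, any vector ψ in the span of {|Dⱼ⟩} orthogonal to |D⟩ satisfies H_S ψ = E_D ψ, and any vector φ in the span of {|Aₖ⟩} orthogonal to |A⟩ satisfies H_S φ = E_A φ. In particular the spectrum of H_S consists of E_D (multiplicity N_D−1), E_A (multiplicity N_A−1), and the two eigenvalues e_{1,2} = (E_D+E_A ± √((E_D−E_A)²+4v²))/2 with v = V√(N_D N_A). -/

import Mathlib

open Matrix Polynomial
open scoped BigOperators

set_option maxHeartbeats 1000000
set_option synthInstance.maxHeartbeats 200000

/-- In the degenerate DA model: every donor-subspace vector orthogonal to `|D⟩` is an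
eigenvector of `H_S` with eigenvalue `E_D`, every acceptor-subspace vector orthogonal to
`|A⟩` is an eigenvector with eigenvalue `E_A`, and the spectrum of `H_S` consists of
`E_D` (multiplicity `N_D−1`), `E_A` (multiplicity `N_A−1`) and the two eigenvalues
`e₁, e₂` of `[[E_D,v],[v,E_A]]`, `v = V√(N_D N_A)` (expressed via the characteristic
polynomial). -/
theorem stmt9 (N_D N_A : ℕ) (hND : 0 < N_D) (hNA : 0 < N_A) (E_D E_A V : ℝ) (hV : V ≠ 0)
    (H : Matrix (Fin N_D ⊕ Fin N_A) (Fin N_D ⊕ Fin N_A) ℂ)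
    (hH : ∀ a b, H a b =
      match a, b with
      | Sum.inl j, Sum.inl j' => if j = j' then (E_D : ℂ) else 0
      | Sum.inr k, Sum.inr k' => if k = k' then (E_A : ℂ) else 0
      | _, _ => (V : ℂ))
    (D A : (Fin N_D ⊕ Fin N_A) → ℂ)
    (hD : D = Sum.elim (fun _ => (((Real.sqrt N_D)⁻¹ : ℝ) : ℂ)) (fun _ => 0))
    (hA : A = Sum.elim (fun _ => 0) (fun _ => (((Real.sqrt N_A)⁻¹ : ℝ) : ℂ)))
    (v e₁ e₂ : ℝ) (hv : v = V * Real.sqrt ((N_D : ℝ) * N_A))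
    (he₁ : e₁ = (E_D + E_A + Real.sqrt ((E_D - E_A) ^ 2 + 4 * v ^ 2)) / 2)
    (he₂ : e₂ = (E_D + E_A - Real.sqrt ((E_D - E_A) ^ 2 + 4 * v ^ 2)) / 2) :
    (∀ ψ : (Fin N_D ⊕ Fin N_A) → ℂ, (∀ k, ψ (Sum.inr k) = 0) →
      star ψ ⬝ᵥ D = 0 → H.mulVec ψ = (E_D : ℂ) • ψ) ∧
    (∀ φ : (Fin N_D ⊕ Fin N_A) → ℂ, (∀ j, φ (Sum.inl j) = 0) →
      star φ ⬝ᵥ A = 0 → H.mulVec φ = (E_A : ℂ) • φ) ∧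
    H.charpoly = (X - C (E_D : ℂ)) ^ (N_D - 1) * (X - C (E_A : ℂ)) ^ (N_A - 1) *
      (X - C (e₁ : ℂ)) * (X - C (e₂ : ℂ)) := by
  classical
  refine ⟨?_, ?_, ?_⟩
  · -- donor eigenvectors
    intro ψ hz horth
    have hsD : Real.sqrt N_D ≠ 0 := ne_of_gt (Real.sqrt_pos.2 (by exact_mod_cast hND))
    have hc : (((Real.sqrt N_D)⁻¹ : ℝ) : ℂ) ≠ 0 := by
      simp [Real.sqrt_eq_zero', hsD]
    have horth' : (∑ j, (starRingEnd ℂ) (ψ (Sum.inl j))) * (((Real.sqrt N_D)⁻¹ : ℝ) : ℂ) = 0 := by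
      simpa [dotProduct, hD, Fintype.sum_sum_type, ← Finset.sum_mul] using horth
    have hconj : ∑ j, (starRingEnd ℂ) (ψ (Sum.inl j)) = 0 :=
      (mul_eq_zero.mp horth').resolve_right hc
    have hsum : ∑ j, ψ (Sum.inl j) = 0 := by
      have := congrArg (starRingEnd ℂ) hconj
      simpa [map_sum] using this
    funext a
    rcases a with j | k
    · simp only [Matrix.mulVec, dotProduct, Fintype.sum_sum_type, hH, hz, Pi.smul_apply,
        smul_eq_mul, mul_zero, Finset.sum_const_zero, add_zero, ite_mul, zero_mul]
      simp [Finset.sum_ite_eq]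
    · simp only [Matrix.mulVec, dotProduct, Fintype.sum_sum_type, hH, hz, Pi.smul_apply,
        smul_eq_mul, mul_zero, Finset.sum_const_zero, add_zero, ite_mul, zero_mul,
        ← Finset.mul_sum, hsum]
  · -- acceptor eigenvectors
    intro φ hz horth
    have hsA : Real.sqrt N_A ≠ 0 := ne_of_gt (Real.sqrt_pos.2 (by exact_mod_cast hNA))
    have hc : (((Real.sqrt N_A)⁻¹ : ℝ) : ℂ) ≠ 0 := by
      simp [Real.sqrt_eq_zero', hsA]
    have horth' : (∑ k, (starRingEnd ℂ) (φ (Sum.inr k))) * (((Real.sqrt N_A)⁻¹ : ℝ) : ℂ) = 0 := by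
      simpa [dotProduct, hA, Fintype.sum_sum_type, ← Finset.sum_mul] using horth
    have hconj : ∑ k, (starRingEnd ℂ) (φ (Sum.inr k)) = 0 :=
      (mul_eq_zero.mp horth').resolve_right hc
    have hsum : ∑ k, φ (Sum.inr k) = 0 := by
      have := congrArg (starRingEnd ℂ) hconj
      simpa [map_sum] using this
    funext a
    rcases a with j | k
    · simp only [Matrix.mulVec, dotProduct, Fintype.sum_sum_type, hH, hz, Pi.smul_apply,
        smul_eq_mul, mul_zero, Finset.sum_const_zero, zero_add, ite_mul, zero_mul,
        ← Finset.mul_sum, hsum]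
    · simp only [Matrix.mulVec, dotProduct, Fintype.sum_sum_type, hH, hz, Pi.smul_apply,
        smul_eq_mul, mul_zero, Finset.sum_const_zero, zero_add, ite_mul, zero_mul]
      simp [Finset.sum_ite_eq]
  · -- characteristic polynomial
    have hv2 : v ^ 2 = V ^ 2 * (N_D * N_A) := by
      rw [hv, mul_pow, Real.sq_sqrt (by positivity)]
    have hs : Real.sqrt ((E_D - E_A) ^ 2 + 4 * v ^ 2) ^ 2 = (E_D - E_A) ^ 2 + 4 * v ^ 2 :=
      Real.sq_sqrt (by positivity)
    have hsumR : e₁ + e₂ = E_D + E_A := by rw [he₁, he₂]; ring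
    have hprodR : e₁ * e₂ = E_D * E_A - V ^ 2 * (N_D * N_A) := by
      have : e₁ * e₂ = ((E_D + E_A) ^ 2 - Real.sqrt ((E_D - E_A) ^ 2 + 4 * v ^ 2) ^ 2) / 4 := by
        rw [he₁, he₂]; ring
      rw [this, hs, ← hv2]; ring
    -- move to the fraction field of ℂ[X]
    set K := FractionRing (Polynomial ℂ) with hK
    set φ : Polynomial ℂ →+* K := algebraMap (Polynomial ℂ) K with hφdef
    have hφ : Function.Injective φ := IsFractionRing.injective (Polynomial ℂ) K
    apply hφ
    set x : K := φ X with hx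
    set eD : K := φ (C (E_D : ℂ)) with heD
    set eA : K := φ (C (E_A : ℂ)) with heA
    set vK : K := φ (C (V : ℂ)) with hvK
    set f₁ : K := φ (C (e₁ : ℂ)) with hf₁
    set f₂ : K := φ (C (e₂ : ℂ)) with hf₂
    have hxD : x - eD ≠ 0 := by
      intro h
      exact Polynomial.X_sub_C_ne_zero (E_D : ℂ) (hφ (by simpa [map_sub] using h))
    have hxA : x - eA ≠ 0 := by
      intro h
      exact Polynomial.X_sub_C_ne_zero (E_A : ℂ) (hφ (by simpa [map_sub] using h))
    -- the rank-two decomposition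
    set u : (Fin N_D ⊕ Fin N_A) → K := Sum.elim (fun _ => 1) (fun _ => 0) with hu
    set w : (Fin N_D ⊕ Fin N_A) → K := Sum.elim (fun _ => 0) (fun _ => 1) with hw
    set d : (Fin N_D ⊕ Fin N_A) → K :=
      Sum.elim (fun _ => (x - eD)⁻¹) (fun _ => (x - eA)⁻¹) with hd
    set Δ : Matrix (Fin N_D ⊕ Fin N_A) (Fin N_D ⊕ Fin N_A) K :=
      Matrix.diagonal (Sum.elim (fun _ : Fin N_D => x - eD) (fun _ : Fin N_A => x - eA)) with hΔ
    set U : Matrix (Fin N_D ⊕ Fin N_A) (Fin 2) K :=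
      fun a i => -vK * d a * (if i = 0 then u a else w a) with hU
    set W : Matrix (Fin 2) (Fin N_D ⊕ Fin N_A) K :=
      fun i b => if i = 0 then w b else u b with hW
    have key : (charmatrix H).map φ = Δ * (1 + U * W) := by
      ext a b
      rw [Matrix.map_apply, charmatrix_apply]
      rw [hΔ]
      rw [Matrix.diagonal_mul]
      have hfin2 : ∀ (f : Fin 2 → K), ∑ i, f i = f 0 + f 1 := fun f => by
        rw [Fin.sum_univ_two]
      simp only [Matrix.add_apply, Matrix.mul_apply]
      simp only [Matrix.add_apply, Matrix.mul_apply, Matrix.one_apply, hfin2, hU, hW, hu, hw, hd,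
        Matrix.diagonal_apply, hH]
      rcases a with j | j <;> rcases b with j' | j' <;>
        simp [Sum.elim_inl, Sum.elim_inr, map_sub, map_zero, Sum.inl.injEq, Sum.inr.injEq,
          mul_inv_cancel₀ (G₀ := K) hxD, mul_inv_cancel₀ (G₀ := K) hxA, mul_add, apply_ite φ] <;>
        first
          | (rw [mul_left_comm, mul_inv_cancel₀ (G₀ := K) hxD, mul_one])
          | (rw [mul_left_comm, mul_inv_cancel₀ (G₀ := K) hxA, mul_one])
          | (split <;> simp [hx, heD, heA])
    have hdetΔ : Δ.det = (x - eD) ^ N_D * (x - eA) ^ N_A := by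
      simp [hΔ, Matrix.det_diagonal, Fintype.prod_sum_type]
    have hWU00 : (W * U) 0 0 = 0 := by
      rw [Matrix.mul_apply]
      simp [Matrix.mul_apply, hU, hW, hu, hw, hd, Fintype.sum_sum_type]
    have hWU11 : (W * U) 1 1 = 0 := by
      rw [Matrix.mul_apply]
      simp [Matrix.mul_apply, hU, hW, hu, hw, hd, Fintype.sum_sum_type]
    have hWU01 : (W * U) 0 1 = -(vK * (N_A : K) * (x - eA)⁻¹) := by
      rw [Matrix.mul_apply]
      simp [Matrix.mul_apply, hU, hW, hu, hw, hd, Fintype.sum_sum_type, Finset.sum_const,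
        Finset.card_univ, nsmul_eq_mul]
      ring
    have hWU10 : (W * U) 1 0 = -(vK * (N_D : K) * (x - eD)⁻¹) := by
      rw [Matrix.mul_apply]
      simp [Matrix.mul_apply, hU, hW, hu, hw, hd, Fintype.sum_sum_type, Finset.sum_const,
        Finset.card_univ, nsmul_eq_mul]
      ring
    have hdet2 : (1 + W * U).det =
        1 - vK ^ 2 * ((N_A : K) * (N_D : K)) * ((x - eA)⁻¹ * (x - eD)⁻¹) := by
      rw [Matrix.det_fin_two]
      simp only [Matrix.add_apply, Matrix.one_apply, hWU00, hWU01, hWU10, hWU11]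
      norm_num
      ring
    -- quadratic identities in K
    have hfs : f₁ + f₂ = eD + eA := by
      have h : (e₁ : ℂ) + (e₂ : ℂ) = (E_D : ℂ) + (E_A : ℂ) := by
        exact_mod_cast congrArg Complex.ofReal hsumR
      rw [hf₁, hf₂, heD, heA, ← map_add, ← map_add, ← map_add, ← map_add, h]
    have hfp : f₁ * f₂ = eD * eA - vK ^ 2 * ((N_D : K) * (N_A : K)) := by
      have h : (e₁ : ℂ) * (e₂ : ℂ) =
          (E_D : ℂ) * (E_A : ℂ) - (V : ℂ) ^ 2 * ((N_D : ℂ) * (N_A : ℂ)) := by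
        exact_mod_cast congrArg Complex.ofReal hprodR
      rw [hf₁, hf₂, heD, heA, hvK, ← _root_.map_mul, ← _root_.map_mul, h]
      push_cast
      simp [map_sub, _root_.map_mul, map_pow, map_natCast]
    have h2 : (x - eD) * (x - eA) - vK ^ 2 * ((N_A : K) * (N_D : K)) = (x - f₁) * (x - f₂) := by
      linear_combination x * hfs - hfp
    have hcan : (x - eD) * (x - eA) * ((x - eA)⁻¹ * (x - eD)⁻¹) = 1 := by
      rw [show (x - eD) * (x - eA) * ((x - eA)⁻¹ * (x - eD)⁻¹) = ((x - eD) * (x - eD)⁻¹) * ((x - eA) * (x - eA)⁻¹) by ring, mul_inv_cancel₀ hxD, mul_inv_cancel₀ hxA, one_mul]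
    have inner : (x - eD) * (x - eA) *
        (1 - vK ^ 2 * ((N_A : K) * (N_D : K)) * ((x - eA)⁻¹ * (x - eD)⁻¹)) =
        (x - f₁) * (x - f₂) := by
      linear_combination h2 - vK ^ 2 * ((N_A : K) * (N_D : K)) * hcan
    obtain ⟨m, hm⟩ : ∃ m, N_D = m + 1 := ⟨N_D - 1, (Nat.succ_pred_eq_of_pos hND).symm⟩
    obtain ⟨k, hk⟩ : ∃ k, N_A = k + 1 := ⟨N_A - 1, (Nat.succ_pred_eq_of_pos hNA).symm⟩
    have key2 : (x - eD) ^ N_D * (x - eA) ^ N_A *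
        (1 - vK ^ 2 * ((N_A : K) * (N_D : K)) * ((x - eA)⁻¹ * (x - eD)⁻¹)) =
        (x - eD) ^ (N_D - 1) * (x - eA) ^ (N_A - 1) * (x - f₁) * (x - f₂) := by
      calc (x - eD) ^ N_D * (x - eA) ^ N_A *
          (1 - vK ^ 2 * ((N_A : K) * (N_D : K)) * ((x - eA)⁻¹ * (x - eD)⁻¹))
          = (x - eD) ^ (N_D - 1) * (x - eA) ^ (N_A - 1) *
            ((x - eD) * (x - eA) *
              (1 - vK ^ 2 * ((N_A : K) * (N_D : K)) * ((x - eA)⁻¹ * (x - eD)⁻¹))) := by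
            rw [hm, hk]; simp only [Nat.add_sub_cancel, pow_succ]; ring
        _ = (x - eD) ^ (N_D - 1) * (x - eA) ^ (N_A - 1) * (x - f₁) * (x - f₂) := by
            rw [inner]; ring
    calc φ H.charpoly = ((charmatrix H).map φ).det := by
          rw [Matrix.charpoly]; exact RingHom.map_det φ _
      _ = (Δ * (1 + U * W)).det := by rw [key]
      _ = Δ.det * (1 + U * W).det := Matrix.det_mul _ _
      _ = Δ.det * (1 + W * U).det := by rw [Matrix.det_one_add_mul_comm]
      _ = (x - eD) ^ (N_D - 1) * (x - eA) ^ (N_A - 1) * (x - f₁) * (x - f₂) := by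
          rw [hdetΔ, hdet2, key2]
      _ = φ ((X - C (E_D : ℂ)) ^ (N_D - 1) * (X - C (E_A : ℂ)) ^ (N_A - 1) *
            (X - C (e₁ : ℂ)) * (X - C (e₂ : ℂ))) := by
          simp [_root_.map_mul, map_pow, map_sub, hx, heD, heA, hf₁, hf₂]
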